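/- arXiv:2207.05731 — 3 statements merged into one kernel-verified Lean document; each statement's English description precedes it below -/
import Mathlib

section
/- Let n be a natural number and let A, B be real symmetric n×n matrices such that A is positive definite. If B² = A² and trace(B) = trace(A), then B = A. -/
theorem stmt_0 (n : ℕ) (A B : Matrix (Fin n) (Fin n) ℝ)
    (hA : A.PosDef) (hB : B.IsSymm)
    (hsq : B * B = A * A) (htr : B.trace = A.trace) : B = A := by
  have hB' : B.IsHermitian := by
    rw [Matrix.IsHermitian, Matrix.conjTranspose]
    convert hB.eq using 1; ext i j; simp
  set U : Matrix (Fin n) (Fin n) ℝ := (hB'.eigenvectorUnitary : Matrix (Fin n) (Fin n) ℝ) with hU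
  set μ : Fin n → ℝ := hB'.eigenvalues with hμ
  have hUU : star U * U = 1 := Matrix.mem_unitaryGroup_iff'.mp hB'.eigenvectorUnitary.2
  have hUU' : U * star U = 1 := Matrix.mem_unitaryGroup_iff.mp hB'.eigenvectorUnitary.2
  have hBspec : B = U * Matrix.diagonal μ * star U := by
    have := hB'.spectral_theorem
    simpa using this
  set A' : Matrix (Fin n) (Fin n) ℝ := U * Matrix.diagonal (fun i => |μ i|) * star U with hA'
  have hA'psd : A'.PosSemidef := by
    refine Matrix.PosSemidef.mul_mul_conjTranspose_same ?_ U
    exact Matrix.posSemidef_diagonal_iff.mpr fun i => abs_nonneg _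
  have hA'sq : A' * A' = B * B := by
    rw [hA', hBspec]
    have h1 : ∀ d : Fin n → ℝ, (U * Matrix.diagonal d * star U) * (U * Matrix.diagonal d * star U)
        = U * Matrix.diagonal (fun i => d i * d i) * star U := by
      intro d
      calc U * Matrix.diagonal d * star U * (U * Matrix.diagonal d * star U)
          = U * Matrix.diagonal d * (star U * U) * Matrix.diagonal d * star U := by
            simp only [Matrix.mul_assoc]
        _ = U * (Matrix.diagonal d * Matrix.diagonal d) * star U := by
            rw [hUU]; simp only [Matrix.mul_one, Matrix.mul_assoc]
      rw [Matrix.diagonal_mul_diagonal]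
    rw [h1, h1]
    have : (fun i => |μ i| * |μ i|) = fun i => μ i * μ i :=
      funext fun i => abs_mul_abs_self _
    rw [this]
  have hAA' : A = A' := by
    open MatrixOrder in
    refine (CFC.sq_eq_sq_iff A A' hA.posSemidef.nonneg hA'psd.nonneg).mp ?_
    rw [pow_two, pow_two, hA'sq, hsq]
  -- traces
  have htrdiag : ∀ d : Fin n → ℝ, (U * Matrix.diagonal d * star U).trace = ∑ i, d i := by
    intro d
    rw [Matrix.trace_mul_cycle, hUU, Matrix.one_mul, Matrix.trace_diagonal]
  have htrA : A.trace = ∑ i, |μ i| := by rw [hAA', hA', htrdiag]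
  have htrB : B.trace = ∑ i, μ i := by rw [hBspec, htrdiag]
  have hsum : ∑ i, (|μ i| - μ i) = 0 := by
    rw [Finset.sum_sub_distrib, ← htrA, ← htrB, htr, sub_self]
  have habs : ∀ i, |μ i| = μ i := by
    intro i
    have := (Finset.sum_eq_zero_iff_of_nonneg (fun i _ => sub_nonneg.mpr (le_abs_self (μ i)))).mp
      hsum i (Finset.mem_univ i)
    linarith
  have : (fun i => |μ i|) = μ := funext habs
  rw [hBspec, hAA', hA', this]
end

section
/- Let n be a natural number, let O be a real orthogonal n×n matrix and let D be a diagonal real n×n matrix with strictly positive diagonal entries. If trace(O·D) = trace(D), then O = 1 (the identity matrix). -/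
open Matrix

theorem stmt_3 (n : ℕ) (O D : Matrix (Fin n) (Fin n) ℝ)
    (hO : Oᵀ * O = 1) (hD : ∀ i j, i ≠ j → D i j = 0)
    (hpos : ∀ i, 0 < D i i) (htr : (O * D).trace = D.trace) : O = 1 := by
  have hcol : ∀ i, ∑ k, O k i ^ 2 = 1 := by
    intro i
    have h := congrFun (congrFun hO i) i
    simpa [Matrix.mul_apply, Matrix.one_apply, pow_two] using h
  have hle : ∀ i, O i i ≤ 1 := by
    intro i
    have h1 : O i i ^ 2 ≤ 1 := by
      rw [← hcol i]
      exact Finset.single_le_sum (f := fun k => O k i ^ 2) (fun k _ => sq_nonneg _) (Finset.mem_univ i)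
    nlinarith [h1]
  have htrO : (O * D).trace = ∑ i, O i i * D i i := by
    rw [Matrix.trace]
    apply Finset.sum_congr rfl
    intro i _
    rw [Matrix.diag, Matrix.mul_apply]
    rw [Finset.sum_eq_single i]
    · intro j _ hj
      rw [hD j i hj, mul_zero]
    · intro h; exact absurd (Finset.mem_univ i) h
  have htrD : D.trace = ∑ i, D i i := rfl
  have hsum0 : ∑ i, (1 - O i i) * D i i = 0 := by
    have : ∑ i, (1 - O i i) * D i i = ∑ i, D i i - ∑ i, O i i * D i i := by
      rw [← Finset.sum_sub_distrib]
      apply Finset.sum_congr rfl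
      intro i _; ring
    rw [this, ← htrD, ← htrO, htr, sub_self]
  have hdiag : ∀ i, O i i = 1 := by
    intro i
    have h0 : (1 - O i i) * D i i = 0 :=
      (Finset.sum_eq_zero_iff_of_nonneg (fun j _ =>
        mul_nonneg (by linarith [hle j]) (hpos j).le)).mp hsum0 i (Finset.mem_univ i)
    have := (hpos i).ne'
    have h1 : 1 - O i i = 0 := by
      rcases mul_eq_zero.mp h0 with h | h
      · exact h
      · exact absurd h this
    linarith
  ext i j
  by_cases hij : i = j
  · subst hij; simp [hdiag i]
  · have hsum : ∑ k ∈ Finset.univ.erase j, O k j ^ 2 = 0 := by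
      have h := hcol j
      rw [← Finset.add_sum_erase _ _ (Finset.mem_univ j), hdiag j] at h
      linarith
    have h0 : O i j ^ 2 = 0 :=
      (Finset.sum_eq_zero_iff_of_nonneg (fun k _ => sq_nonneg _)).mp hsum i
        (Finset.mem_erase.mpr ⟨hij, Finset.mem_univ i⟩)
    have : O i j = 0 := by nlinarith [h0]
    simp [this, Matrix.one_apply, hij]
end

section
/- Let E = EuclideanSpace ℝ (Fin n) and let K ⊆ E be a nonempty compact convex set. Let h : E → E be a map such that h maps K into K, h is 1-Lipschitz on K (i.e. dist(h a, h b) ≤ dist(a, b) for all a, b ∈ K), and h y = y for every y in the frontier of K. Then h z = z for every z ∈ K. -/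
/-- In a strictly convex space, a point between two points with non-increased
distances to both must be the original point. -/
lemma aux_strict {E : Type*} [NormedAddCommGroup E] [NormedSpace ℝ E]
    [StrictConvexSpace ℝ E] {x y z w : E}
    (hsum : dist x z + dist z y = dist x y)
    (h1 : dist x w ≤ dist x z) (h2 : dist w y ≤ dist z y) : w = z := by
  have htri : dist x y ≤ dist x w + dist w y := dist_triangle x w y
  have e1 : dist x w = dist x z := le_antisymm h1 (by linarith)
  have e2 : dist w y = dist z y := le_antisymm h2 (by linarith)
  rcases eq_or_ne x y with rfl | hxy
  · rw [dist_self, dist_comm z x] at hsum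
    have hz0 : dist x z = 0 := by linarith [dist_nonneg (x := x) (y := z)]
    have hw0 : dist x w = 0 := by rw [e1]; exact hz0
    exact (dist_eq_zero.mp hw0).symm.trans (dist_eq_zero.mp hz0)
  · have hd : dist x y ≠ 0 := dist_ne_zero.mpr hxy
    set r : ℝ := dist x z / dist x y with hr
    have hz' : z = AffineMap.lineMap x y r :=
      eq_lineMap_of_dist_eq_mul_of_dist_eq_mul
        (by rw [hr, div_mul_cancel₀ _ hd])
        (by rw [hr]; field_simp; linarith [dist_comm z y ▸ hsum])
    have hw' : w = AffineMap.lineMap x y r :=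
      eq_lineMap_of_dist_eq_mul_of_dist_eq_mul
        (by rw [e1, hr, div_mul_cancel₀ _ hd])
        (by rw [e2, hr]; field_simp; linarith [dist_comm z y ▸ hsum])
    rw [hz', hw']

theorem stmt_5 (n : ℕ) (K : Set (EuclideanSpace ℝ (Fin n)))
    (hne : K.Nonempty) (hK : IsCompact K) (hconv : Convex ℝ K)
    (h : EuclideanSpace ℝ (Fin n) → EuclideanSpace ℝ (Fin n))
    (hmaps : Set.MapsTo h K K)
    (hlip : ∀ a ∈ K, ∀ b ∈ K, dist (h a) (h b) ≤ dist a b)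
    (hbd : ∀ y ∈ frontier K, h y = y) :
    ∀ z ∈ K, h z = z := by
  intro z hz
  rcases Nat.eq_zero_or_pos n with rfl | hn
  · exact Subsingleton.elim _ _
  by_cases hzf : z ∈ frontier K
  · exact hbd z hzf
  have hzint : z ∈ interior K := by
    rcases (IsClosed.frontier_eq hK.isClosed ▸ rfl : frontier K = K \ interior K) with _
    by_contra hzi
    exact hzf ⟨subset_closure hz, fun hi => hzi hi⟩
  -- pick a nonzero direction
  obtain ⟨v, hv⟩ : ∃ v : EuclideanSpace ℝ (Fin n), v ≠ 0 := by
    refine ⟨EuclideanSpace.single ⟨0, hn⟩ 1, fun hcon => ?_⟩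
    have := congrArg (fun f => f ⟨0, hn⟩) hcon
    simp [EuclideanSpace.single_apply] at this
  set S : Set ℝ := {t : ℝ | z + t • v ∈ K} with hS
  have hScl : IsClosed S := hK.isClosed.preimage (by continuity)
  have h0S : (0 : ℝ) ∈ S := by simpa [hS] using hz
  have hSbdd : Bornology.IsBounded S := by
    obtain ⟨C, hC⟩ := hK.isBounded.subset_closedBall z
    have : S ⊆ Metric.closedBall 0 (C / ‖v‖) := by
      intro t ht
      have := hC ht
      simp only [Metric.mem_closedBall] at this ⊢
      have hdist : dist (z + t • v) z = |t| * ‖v‖ := by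
        rw [dist_eq_norm]
        simp [norm_smul, abs_mul]
      rw [hdist] at this
      rw [Real.dist_eq, sub_zero]
      rw [le_div_iff₀ (norm_pos_iff.mpr hv)]
      linarith
    exact (Metric.isBounded_closedBall).subset this
  have hSne : S.Nonempty := ⟨0, h0S⟩
  set a : ℝ := sSup S with ha
  set b : ℝ := sInf S with hb
  have haS : a ∈ S := hScl.csSup_mem hSne hSbdd.bddAbove
  have hbS : b ∈ S := hScl.csInf_mem hSne hSbdd.bddBelow
  have hab : b ≤ 0 ∧ 0 ≤ a :=
    ⟨csInf_le hSbdd.bddBelow h0S, le_csSup hSbdd.bddAbove h0S⟩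
  set x := z + a • v with hx
  set y := z + b • v with hy
  -- x, y are frontier points
  have hxf : x ∈ frontier K := by
    constructor
    · exact subset_closure haS
    · intro hxi
      obtain ⟨ε, hε, hball⟩ := Metric.isOpen_iff.mp isOpen_interior x hxi
      have : a + ε / (2 * ‖v‖) ∈ S := by
        have hvn : (0:ℝ) < ‖v‖ := norm_pos_iff.mpr hv
        have : z + (a + ε / (2 * ‖v‖)) • v ∈ Metric.ball x ε := by
          simp only [Metric.mem_ball, hx, dist_eq_norm]
          have : z + (a + ε / (2 * ‖v‖)) • v - (z + a • v) = (ε / (2 * ‖v‖)) • v := by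
            module
          rw [this, norm_smul, Real.norm_of_nonneg (by positivity)]
          have heq : ε / (2 * ‖v‖) * ‖v‖ = ε / 2 := by field_simp
          rw [heq]; linarith
        show z + (a + ε / (2 * ‖v‖)) • v ∈ K
        exact interior_subset (hball this)
      have := le_csSup hSbdd.bddAbove this
      have hvn : (0:ℝ) < ‖v‖ := norm_pos_iff.mpr hv
      have : (0:ℝ) < ε / (2 * ‖v‖) := by positivity
      linarith [le_csSup hSbdd.bddAbove ‹a + ε / (2 * ‖v‖) ∈ S›]
  have hyf : y ∈ frontier K := by
    constructor
    · exact subset_closure hbS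
    · intro hyi
      obtain ⟨ε, hε, hball⟩ := Metric.isOpen_iff.mp isOpen_interior y hyi
      have hvn : (0:ℝ) < ‖v‖ := norm_pos_iff.mpr hv
      have hmem : b - ε / (2 * ‖v‖) ∈ S := by
        have : z + (b - ε / (2 * ‖v‖)) • v ∈ Metric.ball y ε := by
          simp only [Metric.mem_ball, hy, dist_eq_norm]
          have : z + (b - ε / (2 * ‖v‖)) • v - (z + b • v) = (-(ε / (2 * ‖v‖))) • v := by
            module
          rw [this, norm_smul]
          rw [Real.norm_eq_abs, abs_neg, abs_of_nonneg (by positivity)]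
          have heq : ε / (2 * ‖v‖) * ‖v‖ = ε / 2 := by field_simp
          rw [heq]; linarith
        show z + (b - ε / (2 * ‖v‖)) • v ∈ K
        exact interior_subset (hball this)
      have := csInf_le hSbdd.bddBelow hmem
      have : (0:ℝ) < ε / (2 * ‖v‖) := by positivity
      linarith [csInf_le hSbdd.bddBelow hmem]
  -- distances
  have hdistxz : dist x z = a * ‖v‖ := by
    rw [dist_eq_norm, hx]
    simp [norm_smul, abs_of_nonneg hab.2]
  have hdistzy : dist z y = -b * ‖v‖ := by
    rw [dist_eq_norm, hy]
    have : z - (z + b • v) = (-b) • v := by module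
    rw [this, norm_smul, Real.norm_eq_abs, abs_of_nonneg (by linarith [hab.1])]
  have hdistxy : dist x y = (a - b) * ‖v‖ := by
    rw [dist_eq_norm, hx, hy]
    have : z + a • v - (z + b • v) = (a - b) • v := by module
    rw [this, norm_smul, Real.norm_eq_abs, abs_of_nonneg (by linarith [hab.1, hab.2])]
  have hsum : dist x z + dist z y = dist x y := by
    rw [hdistxz, hdistzy, hdistxy]; ring
  have hxK : x ∈ K := haS
  have hyK : y ∈ K := hbS
  have h1 : dist x (h z) ≤ dist x z := by
    have := hlip x hxK z hz
    rwa [hbd x hxf] at this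
  have h2 : dist (h z) y ≤ dist z y := by
    have := hlip z hz y hyK
    rwa [hbd y hyf] at this
  exact aux_strict hsum h1 h2
end
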